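/- Let f, g ∈ C(𝒩). If F(ω) · conj(G(ω)) is a real number for every ω ∈ L, then the cross-correlation C_{f,g}(n) = ∑_{m∈ℤ^d} f(m+n) · conj(g(m)) satisfies C_{f,g}(n) = conj(C_{f,g}(−n)) for every n ∈ ℤ^d; equivalently, the Laurent polynomial identity F(z) · conj(G)(1/z̄) = conj(F)(1/z̄) · G(z) holds. -/

import Mathlib

open Complex

/-- The box `𝒩 = {n ∈ ℤ^d : 0 ≤ n_j ≤ N_j}`. -/
def inBox {d : ℕ} (N : Fin d → ℕ) (n : Fin d → ℤ) : Prop :=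
  ∀ j, 0 ≤ n j ∧ n j ≤ (N j : ℤ)

/-- Membership in the sampling lattice `L`. -/
def inLattice {d : ℕ} (N : Fin d → ℕ) (ω : Fin d → ℝ) : Prop :=
  ∀ j, ∃ k : ℕ, k ≤ 2 * N j ∧ ω j = (k : ℝ) / (2 * N j + 1)

/-- The Fourier transform `Φg(ω) = ∑_{n∈ℤ^d} g(n) e^{−2πi ω·n}` of a finitely
supported array. -/
noncomputable def phiZ {d : ℕ} (g : (Fin d → ℤ) → ℂ) (ω : Fin d → ℝ) : ℂ :=
  ∑ᶠ n : Fin d → ℤ, g n *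
    Complex.exp (-(2 * Real.pi * Complex.I) * ((∑ j, ω j * ((n j : ℤ) : ℝ) : ℝ) : ℂ))

/-- The cross-correlation `C_{f,g}(n) = ∑_{m∈ℤ^d} f(m+n) conj(g(m))`. -/
noncomputable def crossCorr {d : ℕ} (f g : (Fin d → ℤ) → ℂ) (n : Fin d → ℤ) : ℂ :=
  ∑ᶠ m : Fin d → ℤ, f (m + n) * (starRingEnd ℂ) (g m)

open Finset in
noncomputable def cexpR (x : ℝ) : ℂ := Complex.exp (-(2*Real.pi*Complex.I) * (x:ℂ))

lemma cexpR_add (x y : ℝ) : cexpR (x+y) = cexpR x * cexpR y := by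
  simp [cexpR, mul_add, Complex.exp_add]

lemma cexpR_sum {ι : Type*} (s : Finset ι) (x : ι → ℝ) :
    cexpR (∑ i ∈ s, x i) = ∏ i ∈ s, cexpR (x i) := by
  classical
  induction s using Finset.induction with
  | empty => simp [cexpR]
  | @insert a s h ih => rw [Finset.sum_insert h, cexpR_add, ih, Finset.prod_insert h]

lemma conj_cexpR (x : ℝ) : (starRingEnd ℂ) (cexpR x) = cexpR (-x) := by
  rw [cexpR, cexpR, ← Complex.exp_conj]
  congr 1
  simp [map_mul, map_neg, map_ofNat, Complex.conj_I, Complex.conj_ofReal]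

lemma sum_fin_cexpR (M : ℕ) (hM : 0 < M) (r : ℤ) (hr : r.natAbs < M) :
    ∑ x : Fin M, cexpR ((x : ℝ) * r / M) = if r = 0 then (M : ℂ) else 0 := by
  have hMc : ((M:ℕ):ℂ) ≠ 0 := Nat.cast_ne_zero.mpr hM.ne'
  have hζ : ∀ x : ℕ, cexpR ((x : ℝ) * r / M) = cexpR (r / M) ^ x := by
    intro x
    rw [cexpR, cexpR, ← Complex.exp_nat_mul]
    congr 1
    push_cast
    ring
  have hpow : cexpR (r/M) ^ M = 1 := by
    rw [cexpR, ← Complex.exp_nat_mul]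
    have h2 : ((M:ℕ):ℂ) * (-(2*Real.pi*Complex.I) * (((r:ℝ)/M : ℝ):ℂ)) = ((-r : ℤ):ℂ) * (2*Real.pi*Complex.I) := by
      push_cast
      field_simp
    rw [h2, Complex.exp_int_mul_two_pi_mul_I]
  split_ifs with h
  · subst h; simp [cexpR]
  · have hz : cexpR (r / M) ≠ 1 := by
      rw [cexpR, Ne, Complex.exp_eq_one_iff]
      rintro ⟨n, hn⟩
      have hc : (2*(Real.pi:ℂ)*Complex.I) ≠ 0 :=
        mul_ne_zero (mul_ne_zero two_ne_zero (Complex.ofReal_ne_zero.mpr Real.pi_ne_zero)) Complex.I_ne_zero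
      have h1 : (2*(Real.pi:ℂ)*Complex.I) * (-(r:ℂ)) = (2*(Real.pi:ℂ)*Complex.I) * ((n:ℂ)*M) := by
        have hn' : -(2*Real.pi*Complex.I) * (((r:ℝ)/M : ℝ):ℂ) = (n:ℂ) * (2*Real.pi*Complex.I) := hn
        push_cast at hn'
        field_simp [hMc] at hn'
        linear_combination (2*(Real.pi:ℂ)*Complex.I) * hn'
      have h2 : -(r:ℂ) = (n:ℂ)*M := mul_left_cancel₀ hc h1
      have h3 : -r = n * M := by exact_mod_cast h2
      have hn0 : n ≠ 0 := by rintro rfl; simp at h3; exact h (by omega)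
      have h4 : r.natAbs = n.natAbs * M := by
        rw [show r = -(n*(M:ℤ)) by omega]
        simp [Int.natAbs_mul]
      have h5 : 1 ≤ n.natAbs := Int.natAbs_pos.mpr hn0
      have : M ≤ r.natAbs := by rw [h4]; nlinarith
      omega
    calc ∑ x : Fin M, cexpR ((x : ℝ) * r / M)
        = ∑ x ∈ Finset.range M, cexpR (r/M) ^ x := by
          rw [← Fin.sum_univ_eq_sum_range (fun x => cexpR (r/M) ^ x) M]
          exact Finset.sum_congr rfl fun x _ => hζ x
      _ = (cexpR (r/M) ^ M - 1) / (cexpR (r/M) - 1) := geom_sum_eq hz M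
      _ = 0 := by rw [hpow]; simp


open Finset in
set_option maxHeartbeats 1000000 in
/-- If `F(ω)·conj(G(ω))` is real for every `ω ∈ L`, then the
cross-correlation satisfies `C_{f,g}(n) = conj(C_{f,g}(−n))` for every `n ∈ ℤ^d`. -/
theorem real_cross_spectrum_implies_hermitian_cross_correlation
    (d : ℕ) (hd : 1 ≤ d) (N : Fin d → ℕ) (hN : ∀ j, 1 ≤ N j)
    (f g : (Fin d → ℤ) → ℂ)
    (hfsupp : ∀ n, ¬ inBox N n → f n = 0)
    (hgsupp : ∀ n, ¬ inBox N n → g n = 0)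
    (hreal : ∀ ω : Fin d → ℝ, inLattice N ω →
      (phiZ f ω * (starRingEnd ℂ) (phiZ g ω)).im = 0) :
    ∀ n : Fin d → ℤ, crossCorr f g n = (starRingEnd ℂ) (crossCorr f g (-n)) := by
  classical
  -- the box as a finset
  set B : Finset (Fin d → ℤ) := Fintype.piFinset (fun j => Finset.Icc 0 (N j : ℤ)) with hBdef
  have hBmem : ∀ n : Fin d → ℤ, n ∈ B ↔ inBox N n := by
    intro n
    simp [hBdef, Fintype.mem_piFinset, inBox, Finset.mem_Icc]
  -- the support of the cross-correlation
  set S : Finset (Fin d → ℤ) :=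
    Fintype.piFinset (fun j => Finset.Icc (-(N j : ℤ)) (N j : ℤ)) with hSdef
  have hSmem : ∀ n : Fin d → ℤ, n ∈ S ↔ ∀ j, -(N j:ℤ) ≤ n j ∧ n j ≤ N j := by
    intro n
    simp [hSdef, Fintype.mem_piFinset, Finset.mem_Icc]
  -- transforms as finite sums
  have hphi : ∀ (h : (Fin d → ℤ) → ℂ), (∀ n, ¬ inBox N n → h n = 0) → ∀ ω : Fin d → ℝ,
      phiZ h ω = ∑ a ∈ B, h a * cexpR (∑ j, ω j * ((a j : ℤ) : ℝ)) := by
    intro h hs ω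
    rw [phiZ]
    apply finsum_eq_finset_sum_of_support_subset
    intro a ha
    simp only [Function.mem_support] at ha
    by_contra hB'
    exact ha (by rw [hs a (fun hb => hB' ((hBmem a).mpr hb))]; simp)
  have hcc : ∀ n : Fin d → ℤ,
      crossCorr f g n = ∑ m ∈ B, f (m+n) * (starRingEnd ℂ) (g m) := by
    intro n
    rw [crossCorr]
    apply finsum_eq_finset_sum_of_support_subset
    intro m hm
    simp only [Function.mem_support] at hm
    by_contra hb
    exact hm (by rw [hgsupp m (fun hb2 => hb ((hBmem m).mpr hb2))]; simp)
  -- vanishing outside S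
  have hccS : ∀ n : Fin d → ℤ, n ∉ S → crossCorr f g n = 0 := by
    intro n hn
    rw [hcc]
    apply Finset.sum_eq_zero
    intro m hm
    rcases Classical.em (inBox N (m+n)) with hin|hin
    · exfalso
      apply hn
      rw [hSmem]
      intro j
      have h1 := ((hBmem m).mp hm) j
      have h2 := hin j
      have h3 : (m + n) j = m j + n j := rfl
      rw [h3] at h2
      omega
    · rw [hfsupp _ hin]; simp
  -- the lattice points
  set ωk : (∀ j, Fin (2 * N j + 1)) → (Fin d → ℝ) :=
    fun k j => ((k j : ℕ) : ℝ) / (2 * N j + 1) with hωkdef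
  have hlat : ∀ k, inLattice N (ωk k) := by
    intro k j
    exact ⟨(k j : ℕ), Nat.lt_succ_iff.mp (k j).isLt, rfl⟩
  have hPreal : ∀ k, (starRingEnd ℂ) (phiZ f (ωk k) * (starRingEnd ℂ) (phiZ g (ωk k)))
      = phiZ f (ωk k) * (starRingEnd ℂ) (phiZ g (ωk k)) :=
    fun k => Complex.conj_eq_iff_im.mpr (hreal _ (hlat k))
  -- product expansion
  have hP : ∀ ω : Fin d → ℝ, phiZ f ω * (starRingEnd ℂ) (phiZ g ω)
      = ∑ a ∈ B, ∑ b ∈ B, f a * (starRingEnd ℂ) (g b)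
          * cexpR (∑ j, ω j * ((a j - b j : ℤ) : ℝ)) := by
    intro ω
    rw [hphi f hfsupp, hphi g hgsupp, map_sum, Finset.sum_mul_sum]
    refine Finset.sum_congr rfl fun a _ => Finset.sum_congr rfl fun b _ => ?_
    rw [map_mul, conj_cexpR]
    have he : (∑ j, ω j * ((a j : ℤ):ℝ)) + (-(∑ j, ω j * ((b j : ℤ):ℝ)))
        = ∑ j, ω j * ((a j - b j : ℤ):ℝ) := by
      rw [← Finset.sum_neg_distrib, ← Finset.sum_add_distrib]
      push_cast
      refine Finset.sum_congr rfl fun j _ => by ring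
    rw [← he, cexpR_add]
    ring
  -- orthogonality
  have horth : ∀ r : Fin d → ℤ, (∀ j, (r j).natAbs ≤ 2 * N j) →
      ∑ k : (∀ j, Fin (2 * N j + 1)), cexpR (∑ j, ωk k j * ((r j : ℤ) : ℝ))
        = if r = 0 then (∏ j, ((2*N j+1 : ℕ) : ℂ)) else 0 := by
    intro r hr
    have hsum : ∀ k, cexpR (∑ j, ωk k j * ((r j : ℤ):ℝ))
        = ∏ j, cexpR (((k j : ℕ) : ℝ) * ((r j : ℤ):ℝ) / ((2*N j+1 : ℕ):ℝ)) := by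
      intro k
      rw [cexpR_sum]
      refine Finset.prod_congr rfl fun j _ => ?_
      congr 1
      rw [hωkdef]
      push_cast
      ring
    calc ∑ k : (∀ j, Fin (2 * N j + 1)), cexpR (∑ j, ωk k j * ((r j : ℤ):ℝ))
        = ∑ k ∈ Fintype.piFinset (fun j => (Finset.univ : Finset (Fin (2*N j+1)))),
            ∏ j, cexpR (((k j : ℕ) : ℝ) * ((r j : ℤ):ℝ) / ((2*N j+1 : ℕ):ℝ)) := by
          rw [Fintype.piFinset_univ]
          exact Finset.sum_congr rfl fun k _ => hsum k
      _ = ∏ j, ∑ x : Fin (2*N j+1), cexpR (((x : ℕ) : ℝ) * ((r j : ℤ):ℝ) / ((2*N j+1 : ℕ):ℝ)) :=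
          (Finset.prod_univ_sum (fun j => (Finset.univ : Finset (Fin (2*N j+1))))
            (fun j (x : Fin (2*N j+1)) => cexpR (((x : ℕ) : ℝ) * ((r j : ℤ):ℝ) / ((2*N j+1 : ℕ):ℝ)))).symm
      _ = ∏ j, (if r j = 0 then ((2*N j+1 : ℕ):ℂ) else 0) := by
          refine Finset.prod_congr rfl fun j _ => ?_
          exact sum_fin_cexpR (2*N j+1) (by omega) (r j) (by have := hr j; omega)
      _ = if r = 0 then (∏ j, ((2*N j+1 : ℕ) : ℂ)) else 0 := by
          split_ifs with h
          · refine Finset.prod_congr rfl fun j _ => ?_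
            simp [show r j = 0 from congrFun h j]
          · obtain ⟨j0, hj0⟩ : ∃ j, r j ≠ 0 := by
              by_contra hx; push_neg at hx; exact h (funext hx)
            exact Finset.prod_eq_zero (Finset.mem_univ j0) (by simp [hj0])
  -- conjugating a character
  have hconjch : ∀ (ω : Fin d → ℝ) (m : Fin d → ℤ),
      (starRingEnd ℂ) (cexpR (∑ j, ω j * ((m j : ℤ):ℝ)))
        = cexpR (∑ j, ω j * (((-m) j : ℤ):ℝ)) := by
    intro ω m
    rw [conj_cexpR]
    congr 1
    rw [← Finset.sum_neg_distrib]
    refine Finset.sum_congr rfl fun j _ => ?_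
    have h : ((-m) j : ℤ) = -(m j) := rfl
    rw [h]; push_cast; ring
  -- the sampled inverse transform computes the cross-correlation
  have hT1 : ∀ n ∈ S,
      ∑ k : (∀ j, Fin (2 * N j + 1)),
        (starRingEnd ℂ) (cexpR (∑ j, ωk k j * ((n j : ℤ):ℝ)))
          * (phiZ f (ωk k) * (starRingEnd ℂ) (phiZ g (ωk k)))
      = (∏ j, ((2*N j+1 : ℕ) : ℂ)) * crossCorr f g n := by
    intro n hn
    have hn' := (hSmem n).mp hn
    calc ∑ k : (∀ j, Fin (2 * N j + 1)),
        (starRingEnd ℂ) (cexpR (∑ j, ωk k j * ((n j : ℤ):ℝ)))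
          * (phiZ f (ωk k) * (starRingEnd ℂ) (phiZ g (ωk k)))
        = ∑ k : (∀ j, Fin (2 * N j + 1)), ∑ a ∈ B, ∑ b ∈ B, f a * (starRingEnd ℂ) (g b)
            * cexpR (∑ j, ωk k j * ((a j - b j - n j : ℤ):ℝ)) := by
          refine Finset.sum_congr rfl fun k _ => ?_
          rw [hP, conj_cexpR, Finset.mul_sum]
          refine Finset.sum_congr rfl fun a _ => ?_
          rw [Finset.mul_sum]
          refine Finset.sum_congr rfl fun b _ => ?_
          have he : (-(∑ j, ωk k j * ((n j : ℤ):ℝ))) + (∑ j, ωk k j * ((a j - b j : ℤ):ℝ))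
              = ∑ j, ωk k j * ((a j - b j - n j : ℤ):ℝ) := by
            rw [← Finset.sum_neg_distrib, ← Finset.sum_add_distrib]
            refine Finset.sum_congr rfl fun j _ => ?_
            push_cast; ring
          rw [← he, cexpR_add]; ring
      _ = ∑ a ∈ B, ∑ b ∈ B, f a * (starRingEnd ℂ) (g b)
            * ∑ k : (∀ j, Fin (2 * N j + 1)),
                cexpR (∑ j, ωk k j * ((a j - b j - n j : ℤ):ℝ)) := by
          rw [Finset.sum_comm]
          refine Finset.sum_congr rfl fun a _ => ?_
          rw [Finset.sum_comm]
          refine Finset.sum_congr rfl fun b _ => ?_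
          rw [← Finset.mul_sum]
      _ = ∑ a ∈ B, ∑ b ∈ B, f a * (starRingEnd ℂ) (g b)
            * (if a - b - n = 0 then (∏ j, ((2*N j+1 : ℕ) : ℂ)) else 0) := by
          refine Finset.sum_congr rfl fun a ha => Finset.sum_congr rfl fun b hb => ?_
          congr 1
          have hbound : ∀ j, ((a - b - n) j).natAbs ≤ 2 * N j := by
            intro j
            have h1 := ((hBmem a).mp ha) j
            have h2 := ((hBmem b).mp hb) j
            have h3 := hn' j
            simp only [Pi.sub_apply]
            omega
          have h := horth (a - b - n) hbound
          simp only [Pi.sub_apply] at h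
          exact h
      _ = ∑ b ∈ B, ∑ a ∈ B, (if a = b + n then
            f a * (starRingEnd ℂ) (g b) * (∏ j, ((2*N j+1 : ℕ) : ℂ)) else 0) := by
          rw [Finset.sum_comm]
          refine Finset.sum_congr rfl fun b _ => Finset.sum_congr rfl fun a _ => ?_
          simp only [mul_ite, mul_zero, sub_sub, sub_eq_zero]
      _ = ∑ b ∈ B, (if b + n ∈ B then
            f (b + n) * (starRingEnd ℂ) (g b) * (∏ j, ((2*N j+1 : ℕ) : ℂ)) else 0) := by
          refine Finset.sum_congr rfl fun b _ => ?_
          exact Finset.sum_ite_eq' B (b+n) _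
      _ = ∑ b ∈ B, f (b + n) * (starRingEnd ℂ) (g b) * (∏ j, ((2*N j+1 : ℕ) : ℂ)) := by
          refine Finset.sum_congr rfl fun b _ => ?_
          split_ifs with h
          · rfl
          · rw [hfsupp (b+n) (fun hb2 => h ((hBmem _).mpr hb2))]; ring
      _ = (∏ j, ((2*N j+1 : ℕ) : ℂ)) * crossCorr f g n := by
          rw [hcc n, Finset.mul_sum]
          exact Finset.sum_congr rfl fun b _ => by ring
  -- conjugation symmetry of the sampled sums
  have hT2 : ∀ n : Fin d → ℤ,
      (starRingEnd ℂ) (∑ k : (∀ j, Fin (2 * N j + 1)),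
        (starRingEnd ℂ) (cexpR (∑ j, ωk k j * ((n j : ℤ):ℝ)))
          * (phiZ f (ωk k) * (starRingEnd ℂ) (phiZ g (ωk k))))
      = ∑ k : (∀ j, Fin (2 * N j + 1)),
        (starRingEnd ℂ) (cexpR (∑ j, ωk k j * (((-n) j : ℤ):ℝ)))
          * (phiZ f (ωk k) * (starRingEnd ℂ) (phiZ g (ωk k))) := by
    intro n
    rw [map_sum]
    refine Finset.sum_congr rfl fun k _ => ?_
    rw [map_mul, hPreal k]
    congr 1
    rw [hconjch]
  -- conclusion
  intro n
  by_cases hn : n ∈ S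
  · have hnneg : -n ∈ S := by
      rw [hSmem] at hn ⊢
      intro j
      have h1 := hn j
      have h2 : (-n) j = -(n j) := rfl
      rw [h2]
      omega
    have h1 := hT1 n hn
    have h2 := hT1 (-n) hnneg
    have h3 := hT2 n
    have key : (∏ j, ((2*N j+1 : ℕ) : ℂ)) * crossCorr f g n
        = (starRingEnd ℂ) ((∏ j, ((2*N j+1 : ℕ) : ℂ)) * crossCorr f g (-n)) := by
      rw [← h1, ← h2, ← h3, Complex.conj_conj]
    have hconjProd : (starRingEnd ℂ) (∏ j, ((2*N j+1 : ℕ) : ℂ)) = ∏ j, ((2*N j+1 : ℕ) : ℂ) := by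
      rw [map_prod]
      exact Finset.prod_congr rfl fun j _ => Complex.conj_natCast _
    rw [map_mul, hconjProd] at key
    have hne : (∏ j, ((2*N j+1 : ℕ) : ℂ)) ≠ 0 :=
      Finset.prod_ne_zero_iff.mpr fun j _ => Nat.cast_ne_zero.mpr (by omega)
    exact mul_left_cancel₀ hne key
  · have h1 : crossCorr f g n = 0 := hccS n hn
    have h2 : crossCorr f g (-n) = 0 := by
      apply hccS
      intro hc
      apply hn
      rw [hSmem] at hc ⊢
      intro j
      have h3 := hc j
      have h4 : (-n) j = -(n j) := rfl
      rw [h4] at h3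
      omega
    rw [h1, h2]
    simp
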